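/- arXiv:2312.00155 — 4 statements merged into one kernel-verified Lean document; each statement's English description precedes it below -/
import Mathlib

section
/- Let κ ≥ 1 be a natural number, let c, ε, V be real numbers with 0 < c ≤ 1 and ε ≥ 0, and let a : ℕ → ℝ satisfy a(0) ≥ 0 and, for every i < κ, a(i+1) ≥ (c/κ)·V + (1 − c/κ)·a(i) − 2ε. Then a(κ) ≥ (1 − (1 − c/κ)^κ) · (V − 2κε/c). -/
theorem greedy_recursion_bound (κ : ℕ) (hκ : 1 ≤ κ) (c ε V : ℝ)
    (hc : 0 < c) (hc1 : c ≤ 1) (hε : 0 ≤ ε)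
    (a : ℕ → ℝ) (ha0 : 0 ≤ a 0)
    (hrec : ∀ i < κ, a (i + 1) ≥ (c / κ) * V + (1 - c / κ) * a i - 2 * ε) :
    a κ ≥ (1 - (1 - c / κ) ^ κ) * (V - 2 * κ * ε / c) := by
  have hκR : (1:ℝ) ≤ κ := by exact_mod_cast hκ
  have hκ0 : (0:ℝ) < κ := by linarith
  have hr0 : 0 ≤ 1 - c / κ := by
    have : c / κ ≤ 1 := by
      rw [div_le_one hκ0]; linarith
    linarith
  obtain ⟨r, hr⟩ : ∃ r, r = 1 - c / (κ:ℝ) := ⟨_, rfl⟩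
  obtain ⟨M, hM⟩ : ∃ M, M = V - 2 * κ * ε / c := ⟨_, rfl⟩
  rw [← hr] at hr0 hrec ⊢
  have key : ∀ i ≤ κ, a i ≥ (1 - r ^ i) * M := by
    intro i
    induction i with
    | zero => intro _; simpa using ha0
    | succ n ih =>
      intro hn
      have hnκ : n < κ := hn
      have ihn := ih (le_of_lt hnκ)
      have hrec' := hrec n hnκ
      have hstep : (1 - r ^ (n+1)) * M = (c / κ) * V + r * ((1 - r ^ n) * M) - 2 * ε := by
        have hc' : c ≠ 0 := ne_of_gt hc
        have hκ' : (κ:ℝ) ≠ 0 := ne_of_gt hκ0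
        rw [hr, hM, pow_succ]
        generalize (1 - c / (κ:ℝ)) ^ n = t
        field_simp
        ring
      have : r * ((1 - r ^ n) * M) ≤ r * a n := by
        exact mul_le_mul_of_nonneg_left ihn hr0
      linarith
  rw [hM] at key; exact key κ le_rfl
end

section
/- Let κ ≥ 1 be a natural number, let α ∈ (0,1), let ε ≥ 0 and V ≥ 0 be real numbers, and let a : ℕ → ℝ satisfy a(0) ≥ 0 and, for every i < κ, a(i+1) ≥ ((1−α)/κ)·V + (1 − (1−α)/κ)·a(i) − 2ε. Then a(κ) ≥ (1 − e^{−1} − α)·V − 2κε. -/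
theorem full_budget_approximation (κ : ℕ) (hκ : 1 ≤ κ) (α : ℝ)
    (hα : α ∈ Set.Ioo (0 : ℝ) 1) (ε V : ℝ) (hε : 0 ≤ ε) (hV : 0 ≤ V)
    (a : ℕ → ℝ) (ha0 : 0 ≤ a 0)
    (hrec : ∀ i < κ, a (i + 1) ≥ ((1 - α) / κ) * V + (1 - (1 - α) / κ) * a i - 2 * ε) :
    a κ ≥ (1 - Real.exp (-1) - α) * V - 2 * κ * ε := by
  obtain ⟨hα0, hα1⟩ := hα
  have hκR : (1 : ℝ) ≤ (κ : ℝ) := by exact_mod_cast hκ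
  have hκpos : (0 : ℝ) < κ := by linarith
  set c : ℝ := 1 - (1 - α) / κ with hc
  have hq0 : 0 < (1 - α) / κ := div_pos (by linarith) hκpos
  have hq1 : (1 - α) / κ ≤ 1 := by
    rw [div_le_one hκpos]; linarith
  clear_value c
  have hc0 : 0 ≤ c := by rw [hc]; linarith
  have hc1 : c < 1 := by rw [hc]; linarith
  -- induction
  have key : ∀ i, i ≤ κ → a i ≥ (1 - c ^ i) * V - 2 * i * ε := by
    intro i
    induction i with
    | zero => intro _; simpa using ha0
    | succ n ih =>
      intro hn
      have hn' : n < κ := hn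
      have ihn := ih (le_of_lt hn')
      have hr := hrec n hn'
      have hcn : (0:ℝ) ≤ c ^ n := pow_nonneg hc0 n
      have hcn1 : c ^ n ≤ 1 := pow_le_one₀ hc0 hc1.le
      -- a(n+1) ≥ (1-c)V + c * a n - 2ε ≥ (1-c)V + c((1-c^n)V - 2nε) - 2ε
      have := mul_le_mul_of_nonneg_left ihn.le hc0
      have h2 : c * ((1 - c ^ n) * V - 2 * n * ε) ≤ c * a n :=
        mul_le_mul_of_nonneg_left ihn hc0
      have goal1 : (1 - c ^ (n+1)) * V - 2 * (n+1) * ε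
          ≤ (1 - α) / κ * V + c * a n - 2 * ε := by
        have : (1 - c ^ (n+1)) * V - 2 * (n+1) * ε
            = (1 - α) / κ * V + c * ((1 - c ^ n) * V - 2 * n * ε) - 2 * ε
              - (1 - c) * (2 * n * ε) := by
          rw [hc]; push_cast; ring
        have hnn : 0 ≤ (1 - c) * (2 * n * ε) := by
          have : (0:ℝ) ≤ (n:ℝ) := Nat.cast_nonneg n
          have h1c : 0 ≤ 1 - c := by linarith
          positivity
        rw [this]; linarith
      push_cast
      push_cast at goal1
      linarith [hr, goal1]
  have hk := key κ le_rfl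
  -- c^κ ≤ exp (α - 1)
  have hce : c ≤ Real.exp (-((1 - α) / κ)) := by
    have := Real.add_one_le_exp (-((1 - α) / κ))
    rw [hc]; linarith
  have hpow : c ^ κ ≤ Real.exp (α - 1) := by
    calc c ^ κ ≤ (Real.exp (-((1 - α) / κ))) ^ κ := pow_le_pow_left₀ hc0 hce κ
      _ = Real.exp ((κ : ℝ) * (-((1 - α) / κ))) := by rw [← Real.exp_nat_mul]
      _ = Real.exp (α - 1) := by
          congr 1
          field_simp
          ring
  -- exp(α-1) ≤ exp(-1) + α  via convexity
  have hconv : Real.exp (α - 1) ≤ Real.exp (-1) + α := by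
    have h := convexOn_exp.2 (Set.mem_univ (-1 : ℝ)) (Set.mem_univ (0 : ℝ))
      (by linarith : (0:ℝ) ≤ 1 - α) hα0.le (by ring)
    have : Real.exp ((1 - α) * (-1) + α * 0) ≤ (1 - α) * Real.exp (-1) + α * Real.exp 0 := h
    rw [Real.exp_zero] at this
    have he : (1 - α) * (-1) + α * 0 = α - 1 := by ring
    rw [he] at this
    nlinarith [Real.exp_pos (-1 : ℝ)]
  have hfin : (1 - Real.exp (-1) - α) * V ≤ (1 - c ^ κ) * V := by
    apply mul_le_mul_of_nonneg_right _ hV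
    linarith
  linarith [hk]
end

section
/- Let U be a nonempty finite set, let κ ≥ 1 be a natural number, let ε ≥ 0, and let f : Finset U → ℝ be monotone and submodular with f(∅) = 0. Let OPT ⊆ U be a finite subset with |OPT| ≤ κ, and let s ∈ U satisfy f({s}) ≥ (max_{u ∈ U} f({u})) − 2ε. Then f({s}) ≥ f(OPT)/κ − 2ε. -/
theorem first_iteration_gain {U : Type*} [Fintype U] [DecidableEq U] [Nonempty U]
    (κ : ℕ) (hκ : 1 ≤ κ) (ε : ℝ) (hε : 0 ≤ ε) (f : Finset U → ℝ)
    (hmono : ∀ S T : Finset U, S ⊆ T → f S ≤ f T)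
    (hsub : ∀ S T : Finset U, S ⊆ T → ∀ u ∉ T,
      f (insert u T) - f T ≤ f (insert u S) - f S)
    (hempty : f ∅ = 0)
    (OPT : Finset U) (hOPT : OPT.card ≤ κ)
    (s : U)
    (hs : f {s} ≥ (Finset.univ.sup' Finset.univ_nonempty fun u => f {u}) - 2 * ε) :
    f {s} ≥ f OPT / κ - 2 * ε := by
  set M := Finset.univ.sup' Finset.univ_nonempty fun u => f {u} with hM
  have hsum : ∀ S : Finset U, f S ≤ ∑ u ∈ S, f {u} := by
    intro S
    induction S using Finset.induction_on with
    | empty => simp [hempty]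
    | insert _ _ hu ih =>
      rename_i a S
      rw [Finset.sum_insert hu]
      have h1 := hsub ∅ S (Finset.empty_subset S) a hu
      have : f (insert a ∅) = f {a} := by simp
      linarith
  have hMnonneg : 0 ≤ M := by
    obtain ⟨u⟩ := ‹Nonempty U›
    have h1 : f {u} ≤ M := Finset.le_sup' (fun u => f {u}) (Finset.mem_univ u)
    have h2 : f ∅ ≤ f {u} := hmono _ _ (Finset.empty_subset _)
    linarith
  have hOPTle : f OPT ≤ κ * M := by
    calc f OPT ≤ ∑ u ∈ OPT, f {u} := hsum OPT
      _ ≤ ∑ _u ∈ OPT, M := Finset.sum_le_sum fun u _ => Finset.le_sup' (fun u => f {u}) (Finset.mem_univ u)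
      _ = OPT.card * M := by rw [Finset.sum_const, nsmul_eq_mul]
      _ ≤ κ * M := by
          apply mul_le_mul_of_nonneg_right _ hMnonneg
          exact_mod_cast hOPT
  have hκ' : (0:ℝ) < κ := by exact_mod_cast hκ
  have : f OPT / κ ≤ M := by
    rw [div_le_iff₀ hκ']
    linarith [hOPTle]
  linarith
end

section
/- Let U be a finite set, let κ ≥ 1 be a natural number, let α ∈ (0,1), ε ≥ 0, and w be real numbers, and let f : Finset U → ℝ be monotone and submodular. Let S, OPT ⊆ U be finite subsets with |OPT| ≤ κ, and let s ∈ U. Suppose that for every o ∈ OPT \ S, f(S ∪ {o}) − f(S) ≤ w/(1−α) + ε, and that f(S ∪ {s}) − f(S) ≥ w − ε. Then f(S ∪ {s}) − f(S) ≥ (1−α)·(f(OPT) − f(S))/κ − 2ε. -/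
lemma sum_marginal_gain {U : Type*} [DecidableEq U]
    (f : Finset U → ℝ)
    (hmono : ∀ S T : Finset U, S ⊆ T → f S ≤ f T)
    (hsub : ∀ S T : Finset U, S ⊆ T → ∀ u ∉ T,
      f (insert u T) - f T ≤ f (insert u S) - f S)
    (S : Finset U) (A : Finset U) :
    f (S ∪ A) - f S ≤ ∑ a ∈ A, (f (insert a S) - f S) := by
  induction A using Finset.induction_on with
  | empty => simp
  | insert _ _ ha ih =>
    rename_i a A'
    rw [Finset.sum_insert ha, Finset.union_insert]
    by_cases h : a ∈ S ∪ A'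
    · rw [Finset.insert_eq_self.mpr h]
      have : f S ≤ f (insert a S) := hmono _ _ (Finset.subset_insert _ _)
      linarith
    · have h1 := hsub S (S ∪ A') Finset.subset_union_left a h
      linarith

theorem later_iteration_gain {U : Type*} [Fintype U] [DecidableEq U]
    (κ : ℕ) (hκ : 1 ≤ κ) (α ε w : ℝ) (hα : α ∈ Set.Ioo (0 : ℝ) 1) (hε : 0 ≤ ε)
    (f : Finset U → ℝ)
    (hmono : ∀ S T : Finset U, S ⊆ T → f S ≤ f T)
    (hsub : ∀ S T : Finset U, S ⊆ T → ∀ u ∉ T,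
      f (insert u T) - f T ≤ f (insert u S) - f S)
    (S OPT : Finset U) (hOPT : OPT.card ≤ κ) (s : U)
    (hout : ∀ o ∈ OPT \ S, f (insert o S) - f S ≤ w / (1 - α) + ε)
    (hs : f (insert s S) - f S ≥ w - ε) :
    f (insert s S) - f S ≥ (1 - α) * (f OPT - f S) / κ - 2 * ε := by
  obtain ⟨hα0, hα1⟩ := hα
  have hκR : (1 : ℝ) ≤ (κ : ℝ) := by exact_mod_cast hκ
  have hgain0 : 0 ≤ f (insert s S) - f S := by
    have := hmono S (insert s S) (Finset.subset_insert _ _); linarith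
  by_cases hpos : 0 < f OPT - f S
  · -- OPT not covered; bound via sum
    have key := sum_marginal_gain f hmono hsub S (OPT \ S)
    rw [Finset.union_sdiff_self_eq_union] at key
    have hOPTle : f OPT ≤ f (S ∪ OPT) := hmono _ _ Finset.subset_union_right
    set B := w / (1 - α) + ε with hB
    have hsum : ∑ a ∈ OPT \ S, (f (insert a S) - f S) ≤ (OPT \ S).card • B :=
      Finset.sum_le_card_nsmul _ _ _ (fun x hx => hout x hx)
    rw [nsmul_eq_mul] at hsum
    have hcard : ((OPT \ S).card : ℝ) ≤ (κ : ℝ) := by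
      exact_mod_cast le_trans (Finset.card_le_card (Finset.sdiff_subset)) hOPT
    have hcard0 : (0:ℝ) ≤ ((OPT \ S).card : ℝ) := by positivity
    have hchain : f OPT - f S ≤ ((OPT \ S).card : ℝ) * B := by linarith
    have hBpos : 0 < B := by
      by_contra hB0
      push_neg at hB0
      have : ((OPT \ S).card : ℝ) * B ≤ 0 := mul_nonpos_of_nonneg_of_nonpos hcard0 hB0
      linarith
    have h2 : f OPT - f S ≤ (κ : ℝ) * B := by
      have := mul_le_mul_of_nonneg_right hcard hBpos.le
      linarith
    have hκpos : (0:ℝ) < (κ:ℝ) := by linarith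
    have h3 : (1 - α) * (f OPT - f S) / κ ≤ (1 - α) * B := by
      rw [div_le_iff₀ hκpos]
      have h1α : 0 ≤ 1 - α := by linarith
      calc (1 - α) * (f OPT - f S) ≤ (1 - α) * ((κ:ℝ) * B) := by
            exact mul_le_mul_of_nonneg_left h2 h1α
        _ = (1 - α) * B * κ := by ring
    have h4 : (1 - α) * B = w + (1 - α) * ε := by
      rw [hB, mul_add, mul_div_cancel₀ _ (by linarith : (1 - α) ≠ 0)]
    clear_value B
    have h5 : (1 - α) * ε ≤ ε := by nlinarith
    linarith
  · push_neg at hpos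
    have hκpos : (0:ℝ) < (κ:ℝ) := by linarith
    have : (1 - α) * (f OPT - f S) / κ ≤ 0 := by
      apply div_nonpos_of_nonpos_of_nonneg _ hκpos.le
      exact mul_nonpos_of_nonneg_of_nonpos (by linarith) hpos
    linarith
end
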